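/- For an odd integer n ≥ 3 and x₀ ∈ [0,1], with J = [0,x₀] × [0,1], the double sum Σ_{i∈S(n)} Σ_{j∈S(n)} λ²(Qᵢⁿ ∩ Rⱼⁿ ∩ J) lies between (x₀/4)(1 − 3/n + 2/n²) − 1/(4n) and (x₀/4)(1 − 3/(2n) + 3/(4n²)) + 3/n. -/

import Mathlib

open MeasureTheory Set

/-- The parallelogram `conv{(0,b₁),(0,b₁+δ),(1,b₂),(1,b₂+δ)}`. -/
noncomputable def Par (b₁ b₂ δ : ℝ) : Set (ℝ × ℝ) :=
  convexHull ℝ {(0, b₁), (0, b₁ + δ), (1, b₂), (1, b₂ + δ)}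

lemma Par_eq (b₁ b₂ δ : ℝ) (hδ : 0 < δ) :
    Par b₁ b₂ δ = {p : ℝ × ℝ | p.1 ∈ Icc (0:ℝ) 1 ∧
      p.2 ∈ Icc (b₁ + p.1 * (b₂ - b₁)) (b₁ + p.1 * (b₂ - b₁) + δ)} := by
  apply Subset.antisymm
  · apply convexHull_min
    · intro p hp
      simp only [Set.mem_insert_iff, Set.mem_singleton_iff] at hp
      rcases hp with rfl|rfl|rfl|rfl <;>
        exact ⟨⟨by norm_num, by norm_num⟩, by constructor <;> simp <;> nlinarith [hδ.le]⟩
    · intro p hp q hq a b ha hb hab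
      simp only [Set.mem_setOf_eq, Set.mem_Icc] at hp hq ⊢
      simp only [Prod.fst_add, Prod.snd_add, Prod.smul_fst, Prod.smul_snd, smul_eq_mul]
      obtain ⟨⟨hp1, hp2⟩, hp3, hp4⟩ := hp
      obtain ⟨⟨hq1, hq2⟩, hq3, hq4⟩ := hq
      obtain rfl : b = 1 - a := by linarith
      refine ⟨⟨by nlinarith, by nlinarith⟩, ⟨?_, ?_⟩⟩ <;>
        nlinarith [mul_le_mul_of_nonneg_left hp3 ha, mul_le_mul_of_nonneg_left hq3 hb,
          mul_le_mul_of_nonneg_left hp4 ha, mul_le_mul_of_nonneg_left hq4 hb]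
  · rintro ⟨x, y⟩ ⟨⟨hx0, hx1⟩, hy1, hy2⟩
    simp only [Set.mem_Icc] at hy1 hy2
    set s : ℝ := (y - (b₁ + x * (b₂ - b₁))) / δ with hs
    have hs0 : 0 ≤ s := div_nonneg (by linarith) hδ.le
    have hs1 : s ≤ 1 := by rw [hs, div_le_one hδ]; linarith
    have hsδ : s * δ = y - (b₁ + x * (b₂ - b₁)) := by
      rw [hs]; field_simp
    have h1 : ((0:ℝ), b₁ + s*δ) ∈ Par b₁ b₂ δ := by
      apply segment_subset_convexHull (show ((0:ℝ), b₁) ∈ _ from by left; rfl)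
        (show ((0:ℝ), b₁ + δ) ∈ _ from by right; left; rfl)
      exact ⟨1 - s, s, by linarith, hs0, by ring, by
        simp only [Prod.smul_mk, smul_eq_mul, Prod.mk_add_mk, Prod.mk.injEq]
        constructor <;> ring⟩
    have h2 : ((1:ℝ), b₂ + s*δ) ∈ Par b₁ b₂ δ := by
      apply segment_subset_convexHull (show ((1:ℝ), b₂) ∈ _ from by right; right; left; rfl)
        (show ((1:ℝ), b₂ + δ) ∈ _ from by right; right; right; rfl)
      exact ⟨1 - s, s, by linarith, hs0, by ring, by
        simp only [Prod.smul_mk, smul_eq_mul, Prod.mk_add_mk, Prod.mk.injEq]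
        constructor <;> ring⟩
    have hseg := (convex_convexHull ℝ _).segment_subset h1 h2
    apply hseg
    exact ⟨1 - x, x, by linarith, hx0, by ring, by
      simp only [Prod.smul_mk, smul_eq_mul, Prod.mk_add_mk, Prod.mk.injEq]
      constructor
      · ring
      · nlinarith [hsδ]⟩


/-- The index set `S(n) = {0, 2, ..., n² - n - 2}`. -/
def Sn (n : ℕ) : Finset ℕ := (Finset.range (n ^ 2 - n - 1)).filter (fun i => Even i)

/-- The rising parallelogram `Qᵢⁿ`. -/
noncomputable def Q (n i : ℕ) : Set (ℝ × ℝ) :=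
  Par ((i : ℝ) / n ^ 2) (((i : ℝ) + n) / n ^ 2) (1 / n ^ 2)

/-- The falling parallelogram `Rⱼⁿ`. -/
noncomputable def R (n j : ℕ) : Set (ℝ × ℝ) :=
  Par (((j : ℝ) + n) / n ^ 2) ((j : ℝ) / n ^ 2) (1 / n ^ 2)

lemma QRJ_eq (n : ℕ) (hn : 3 ≤ n) (i j : ℕ) (hi : (i:ℝ) ≤ n^2 - n - 2) (x₀ : ℝ)
    (hx0 : 0 ≤ x₀) (hx1 : x₀ ≤ 1) :
    Q n i ∩ R n j ∩ Icc (0:ℝ) x₀ ×ˢ Icc (0:ℝ) 1 =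
    {p : ℝ × ℝ | p.1 ∈ Icc (0:ℝ) x₀ ∧
      p.2 ∈ Icc (max (((i:ℝ) + n * p.1) / n^2) (((j:ℝ) + n - n * p.1) / n^2))
                (min (((i:ℝ) + n * p.1) / n^2) (((j:ℝ) + n - n * p.1) / n^2) + 1 / n^2)} := by
  have hν : (0:ℝ) < n := by positivity
  have hδ : (0:ℝ) < 1 / n^2 := by positivity
  rw [Q, R, Par_eq _ _ _ hδ, Par_eq _ _ _ hδ]
  ext ⟨x, y⟩
  simp only [Set.mem_inter_iff, Set.mem_setOf_eq, Set.mem_prod, Set.mem_Icc]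
  have e1 : (i:ℝ) / n^2 + x * (((i:ℝ) + n) / n^2 - (i:ℝ) / n^2) = ((i:ℝ) + n * x) / n^2 := by
    field_simp; ring
  have e2 : ((j:ℝ) + n) / n^2 + x * ((j:ℝ) / n^2 - ((j:ℝ) + n) / n^2)
      = ((j:ℝ) + n - n * x) / n^2 := by
    field_simp; ring
  rw [e1, e2]
  constructor
  · rintro ⟨⟨⟨⟨hx01, hx11⟩, hq1, hq2⟩, ⟨-, hr1, hr2⟩⟩, ⟨hxx0, hxx1⟩, -, -⟩
    refine ⟨⟨hx01, hxx1⟩, max_le hq1 hr1, ?_⟩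
    rcases le_total (((i:ℝ) + n * x) / n^2) (((j:ℝ) + n - n * x) / n^2) with h|h
    · rw [min_eq_left h]; linarith
    · rw [min_eq_right h]; linarith
  · rintro ⟨⟨hx01, hxx1⟩, hy1, hy2⟩
    have hxle1 : x ≤ 1 := le_trans hxx1 hx1
    have hmax1 : ((i:ℝ) + n * x) / n^2 ≤ y := le_trans (le_max_left _ _) hy1
    have hmax2 : ((j:ℝ) + n - n * x) / n^2 ≤ y := le_trans (le_max_right _ _) hy1
    have hmin1 : y ≤ ((i:ℝ) + n * x) / n^2 + 1 / n^2 :=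
      le_trans hy2 (by gcongr; exact min_le_left _ _)
    have hmin2 : y ≤ ((j:ℝ) + n - n * x) / n^2 + 1 / n^2 :=
      le_trans hy2 (by gcongr; exact min_le_right _ _)
    have hy0 : 0 ≤ y := le_trans (by positivity) hmax1
    have hyle1 : y ≤ 1 := by
      refine le_trans hmin1 ?_
      rw [← add_div, div_le_one (by positivity)]
      nlinarith
    exact ⟨⟨⟨⟨hx01, hxle1⟩, hmax1, hmin1⟩, ⟨⟨hx01, hxle1⟩, hmax2, hmin2⟩⟩,
      ⟨hx01, hxx1⟩, hy0, hyle1⟩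


lemma ofReal_max_zero (a : ℝ) : ENNReal.ofReal (max 0 a) = ENNReal.ofReal a := by
  rcases le_total a 0 with h|h
  · rw [max_eq_left h, ENNReal.ofReal_of_nonpos h, ENNReal.ofReal_zero]
  · rw [max_eq_right h]

lemma vol_eq (x₀ : ℝ) (f g : ℝ → ℝ) (hf : Continuous f) (hg : Continuous g) :
    (volume {p : ℝ × ℝ | p.1 ∈ Icc (0:ℝ) x₀ ∧ p.2 ∈ Icc (f p.1) (g p.1)}).toReal
      = ∫ x in Icc (0:ℝ) x₀, max 0 (g x - f x) := by
  set S := {p : ℝ × ℝ | p.1 ∈ Icc (0:ℝ) x₀ ∧ p.2 ∈ Icc (f p.1) (g p.1)} with hS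
  have hSm : MeasurableSet S := by
    have : S = ({p : ℝ × ℝ | 0 ≤ p.1} ∩ {p : ℝ × ℝ | p.1 ≤ x₀}) ∩
        ({p : ℝ × ℝ | f p.1 ≤ p.2} ∩ {p : ℝ × ℝ | p.2 ≤ g p.1}) := by
      ext p; simp [hS, Set.mem_Icc, and_assoc]
    rw [this]
    exact (((isClosed_le continuous_const continuous_fst).inter
      (isClosed_le continuous_fst continuous_const)).inter
      (((isClosed_le (hf.comp continuous_fst) continuous_snd)).inter
      (isClosed_le continuous_snd (hg.comp continuous_fst)))).measurableSet
  have hint : IntegrableOn (fun x => max 0 (g x - f x)) (Icc (0:ℝ) x₀) volume :=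
    ((continuous_const.max (hg.sub hf)).integrableOn_Icc)
  rw [MeasureTheory.Measure.volume_eq_prod, Measure.prod_apply hSm]
  have hpre : ∀ x : ℝ, (volume (Prod.mk x ⁻¹' S))
      = (Icc (0:ℝ) x₀).indicator (fun x => ENNReal.ofReal (g x - f x)) x := by
    intro x
    by_cases hx : x ∈ Icc (0:ℝ) x₀
    · have : Prod.mk x ⁻¹' S = Icc (f x) (g x) := by
        ext y; simp [hS, hx, hx.1, hx.2]
      rw [this, Real.volume_Icc, indicator_of_mem hx]
    · have : Prod.mk x ⁻¹' S = ∅ := by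
        ext y
        simp only [hS, Set.mem_preimage, Set.mem_setOf_eq, Set.mem_empty_iff_false, iff_false,
          not_and]
        intro h1; exact absurd h1 hx
      rw [this, measure_empty, indicator_of_notMem hx]
  rw [lintegral_congr hpre, lintegral_indicator measurableSet_Icc _]
  have key : ∫⁻ x in Icc (0:ℝ) x₀, ENNReal.ofReal (g x - f x)
      = ENNReal.ofReal (∫ x in Icc (0:ℝ) x₀, max 0 (g x - f x)) := by
    calc ∫⁻ x in Icc (0:ℝ) x₀, ENNReal.ofReal (g x - f x)
        = ∫⁻ x in Icc (0:ℝ) x₀, ENNReal.ofReal (max 0 (g x - f x)) :=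
          lintegral_congr fun x => (ofReal_max_zero _).symm
      _ = ENNReal.ofReal (∫ x in Icc (0:ℝ) x₀, max 0 (g x - f x)) :=
          (ofReal_integral_eq_lintegral_ofReal hint
            (Filter.Eventually.of_forall fun x => le_max_left _ _)).symm
  rw [key, ENNReal.toReal_ofReal
    (setIntegral_nonneg measurableSet_Icc fun x _ => le_max_left _ _)]


section Tent
variable (ν c : ℝ)

noncomputable def tent (ν c : ℝ) (x : ℝ) : ℝ := max 0 ((1 - |c + 2*ν*x|)/ν^2)

lemma tent_cont : Continuous (tent ν c) := by
  unfold tent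
  exact continuous_const.max (by fun_prop)

lemma tent_nonneg (x : ℝ) : 0 ≤ tent ν c x := le_max_left _ _

lemma tent_integral {ν c a b : ℝ} (hν : 0 < ν)
    (ha : a ≤ (-1 - c)/(2*ν)) (hb : (1 - c)/(2*ν) ≤ b) :
    ∫ x in a..b, tent ν c x = 1/(2*ν^3) := by
  set s₁ := (-1 - c)/(2*ν) with hs₁
  set sm := (-c)/(2*ν) with hsm
  set s₂ := (1 - c)/(2*ν) with hs₂
  have h12 : s₁ ≤ sm := by rw [hs₁, hsm, div_le_div_iff₀ (by linarith) (by linarith)]; nlinarith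
  have h2m : sm ≤ s₂ := by rw [hs₂, hsm, div_le_div_iff₀ (by linarith) (by linarith)]; nlinarith
  have hcont := tent_cont ν c
  have hii : ∀ u v : ℝ, IntervalIntegrable (tent ν c) volume u v :=
    fun u v => hcont.intervalIntegrable u v
  have e1 : ∫ x in a..s₁, tent ν c x = 0 := by
    rw [intervalIntegral.integral_congr (g := fun _ => (0:ℝ)), intervalIntegral.integral_const,
      smul_zero]
    intro x hx
    rw [Set.uIcc_of_le ha] at hx
    have hx2 : x ≤ s₁ := hx.2
    have hc : c + 2*ν*x ≤ -1 := by
      have h' := (le_div_iff₀ (by linarith : (0:ℝ) < 2*ν)).mp hx2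
      linarith
    have habs : 1 ≤ |c + 2*ν*x| := le_abs.mpr (Or.inr (by linarith))
    have hle : (1 - |c + 2*ν*x|)/ν^2 ≤ 0 := by
      apply div_nonpos_of_nonpos_of_nonneg (by linarith) (by positivity)
    simp [tent, max_eq_left hle]
  have e4 : ∫ x in s₂..b, tent ν c x = 0 := by
    rw [intervalIntegral.integral_congr (g := fun _ => (0:ℝ)), intervalIntegral.integral_const,
      smul_zero]
    intro x hx
    rw [Set.uIcc_of_le hb] at hx
    have hx2 : s₂ ≤ x := hx.1
    have hc : 1 ≤ c + 2*ν*x := by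
      have h' := (div_le_iff₀ (by linarith : (0:ℝ) < 2*ν)).mp hx2
      linarith
    have habs : 1 ≤ |c + 2*ν*x| := le_abs.mpr (Or.inl hc)
    have hle : (1 - |c + 2*ν*x|)/ν^2 ≤ 0 := by
      apply div_nonpos_of_nonpos_of_nonneg (by linarith) (by positivity)
    simp [tent, max_eq_left hle]
  have e2 : ∫ x in s₁..sm, tent ν c x = 1/(4*ν^3) := by
    have hcg : ∫ x in s₁..sm, tent ν c x = ∫ x in s₁..sm, ((1+c)/ν^2 + (2*ν/ν^2)*x) := by
      apply intervalIntegral.integral_congr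
      intro x hx
      rw [Set.uIcc_of_le h12] at hx
      have hl : -1 ≤ c + 2*ν*x := by
        have h' := (div_le_iff₀ (by linarith : (0:ℝ) < 2*ν)).mp hx.1
        linarith
      have hu : c + 2*ν*x ≤ 0 := by
        have h' := (le_div_iff₀ (by linarith : (0:ℝ) < 2*ν)).mp hx.2
        linarith
      have habs : |c + 2*ν*x| = -(c + 2*ν*x) := abs_of_nonpos hu
      have hpos : 0 ≤ (1 - |c + 2*ν*x|)/ν^2 := by
        apply div_nonneg (by rw [habs]; linarith) (by positivity)
      rw [tent, max_eq_right hpos, habs]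
      field_simp
      ring
    rw [hcg, intervalIntegral.integral_add intervalIntegrable_const
      ((intervalIntegral.intervalIntegrable_id).const_mul _),
      intervalIntegral.integral_const, intervalIntegral.integral_const_mul, integral_id]
    rw [hs₁, hsm]
    have hν2 : (ν:ℝ) ≠ 0 := ne_of_gt hν
    field_simp
    have h3 : ν^3 * ν⁻¹^3 = 1 := by rw [← mul_pow, mul_inv_cancel₀ hν2, one_pow]
    linear_combination (8*c+8) * h3
  have e3 : ∫ x in sm..s₂, tent ν c x = 1/(4*ν^3) := by
    have hcg : ∫ x in sm..s₂, tent ν c x = ∫ x in sm..s₂, ((1-c)/ν^2 + (-(2*ν)/ν^2)*x) := by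
      apply intervalIntegral.integral_congr
      intro x hx
      rw [Set.uIcc_of_le h2m] at hx
      have hl : 0 ≤ c + 2*ν*x := by
        have h' := (div_le_iff₀ (by linarith : (0:ℝ) < 2*ν)).mp hx.1
        linarith
      have hu : c + 2*ν*x ≤ 1 := by
        have h' := (le_div_iff₀ (by linarith : (0:ℝ) < 2*ν)).mp hx.2
        linarith
      have habs : |c + 2*ν*x| = c + 2*ν*x := abs_of_nonneg hl
      have hpos : 0 ≤ (1 - |c + 2*ν*x|)/ν^2 := by
        apply div_nonneg (by rw [habs]; linarith) (by positivity)
      rw [tent, max_eq_right hpos, habs]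
      field_simp
      ring
    rw [hcg, intervalIntegral.integral_add intervalIntegrable_const
      ((intervalIntegral.intervalIntegrable_id).const_mul _),
      intervalIntegral.integral_const, intervalIntegral.integral_const_mul, integral_id]
    rw [hsm, hs₂]
    have hν2 : (ν:ℝ) ≠ 0 := ne_of_gt hν
    field_simp
    have h3 : ν^3 * ν⁻¹^3 = 1 := by rw [← mul_pow, mul_inv_cancel₀ hν2, one_pow]
    linear_combination (8-8*c) * h3
  have comb : ∫ x in a..b, tent ν c x
      = (((∫ x in a..s₁, tent ν c x) + ∫ x in s₁..sm, tent ν c x)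
        + ∫ x in sm..s₂, tent ν c x) + ∫ x in s₂..b, tent ν c x := by
    rw [intervalIntegral.integral_add_adjacent_intervals (hii a s₁) (hii s₁ sm),
      intervalIntegral.integral_add_adjacent_intervals (hii a sm) (hii sm s₂),
      intervalIntegral.integral_add_adjacent_intervals (hii a s₂) (hii s₂ b)]
  rw [comb, e1, e2, e3, e4]
  ring
end Tent

lemma Icc_int_eq {ν c x₀ : ℝ} (hx0 : 0 ≤ x₀) :
    ∫ x in Icc (0:ℝ) x₀, tent ν c x = ∫ x in (0:ℝ)..x₀, tent ν c x := by
  rw [intervalIntegral.integral_of_le hx0, integral_Icc_eq_integral_Ioc]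

lemma tentI_nonneg (ν c x₀ : ℝ) : 0 ≤ ∫ x in Icc (0:ℝ) x₀, tent ν c x :=
  setIntegral_nonneg measurableSet_Icc fun x _ => tent_nonneg ν c x

lemma tentI_le {ν c : ℝ} (x₀ : ℝ) (hν : 0 < ν) (hx0 : 0 ≤ x₀) :
    ∫ x in Icc (0:ℝ) x₀, tent ν c x ≤ 1/(2*ν^3) := by
  set a := min 0 ((-1 - c)/(2*ν)) with hA
  set b := max x₀ ((1 - c)/(2*ν)) with hB
  have hab : a ≤ b := le_trans (min_le_left _ _) (le_trans hx0 (le_max_left _ _))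
  have hsub : Icc (0:ℝ) x₀ ⊆ Icc a b :=
    Icc_subset_Icc (min_le_left _ _) (le_max_left _ _)
  have h1 : ∫ x in Icc (0:ℝ) x₀, tent ν c x ≤ ∫ x in Icc a b, tent ν c x := by
    apply setIntegral_mono_set ((tent_cont ν c).integrableOn_Icc)
      (Filter.Eventually.of_forall fun x => tent_nonneg ν c x)
      (HasSubset.Subset.eventuallyLE hsub)
  have h2 : ∫ x in Icc a b, tent ν c x = 1/(2*ν^3) := by
    rw [show ∫ x in Icc a b, tent ν c x = ∫ x in a..b, tent ν c x from by
      rw [intervalIntegral.integral_of_le hab, integral_Icc_eq_integral_Ioc]]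
    exact tent_integral hν (min_le_right _ _) (le_max_right _ _)
  linarith

lemma tentI_zero {ν c : ℝ} (x₀ : ℝ) (hν : 0 < ν) (hx0 : 0 ≤ x₀)
    (h : 1 ≤ c ∨ c + 2*ν*x₀ ≤ -1) :
    ∫ x in Icc (0:ℝ) x₀, tent ν c x = 0 := by
  have h0 : ∫ x in Icc (0:ℝ) x₀, tent ν c x = ∫ x in Icc (0:ℝ) x₀, (0:ℝ) := by
    apply setIntegral_congr_fun measurableSet_Icc
    intro x hx
    have habs : 1 ≤ |c + 2*ν*x| := by
      rcases h with h|h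
      · exact le_abs.mpr (Or.inl (by nlinarith [hx.1]))
      · exact le_abs.mpr (Or.inr (by nlinarith [hx.2]))
    have hle : (1 - |c + 2*ν*x|)/ν^2 ≤ 0 :=
      div_nonpos_of_nonpos_of_nonneg (by linarith) (by positivity)
    simp [tent, max_eq_left hle]
  simpa using h0

lemma tentI_full {ν c : ℝ} (x₀ : ℝ) (hν : 0 < ν) (h1 : c ≤ -1) (h2 : 1 ≤ c + 2*ν*x₀) :
    ∫ x in Icc (0:ℝ) x₀, tent ν c x = 1/(2*ν^3) := by
  have hx0 : 0 ≤ x₀ := by nlinarith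
  rw [Icc_int_eq hx0]
  apply tent_integral hν
  · rw [le_div_iff₀ (by linarith : (0:ℝ) < 2*ν)]; linarith
  · rw [div_le_iff₀ (by linarith : (0:ℝ) < 2*ν)]; linarith

lemma term_eq (n : ℕ) (hn : 3 ≤ n) (i j : ℕ) (hi : (i:ℝ) ≤ (n:ℝ)^2 - n - 2) (x₀ : ℝ)
    (hx0 : 0 ≤ x₀) (hx1 : x₀ ≤ 1) :
    (volume (Q n i ∩ R n j ∩ Icc (0:ℝ) x₀ ×ˢ Icc (0:ℝ) 1)).toReal
      = ∫ x in Icc (0:ℝ) x₀, tent (n:ℝ) ((i:ℝ) - j - n) x := by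
  have hν : (0:ℝ) < n := by
    have : (3:ℝ) ≤ n := by exact_mod_cast hn
    linarith
  have hF : Continuous fun x : ℝ =>
      max (((i:ℝ) + n * x) / (n:ℝ)^2) (((j:ℝ) + n - n * x) / (n:ℝ)^2) := by fun_prop
  have hG : Continuous fun x : ℝ =>
      min (((i:ℝ) + n * x) / (n:ℝ)^2) (((j:ℝ) + n - n * x) / (n:ℝ)^2) + 1 / (n:ℝ)^2 := by
    fun_prop
  rw [QRJ_eq n hn i j hi x₀ hx0 hx1, vol_eq x₀ _ _ hF hG]
  apply setIntegral_congr_fun measurableSet_Icc (fun x _ => ?_)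
  rw [tent]
  congr 1
  have hn2 : ((n:ℝ)^2) ≠ 0 := by positivity
  rcases le_total (((i:ℝ) + n * x) / (n:ℝ)^2) (((j:ℝ) + n - n * x) / (n:ℝ)^2) with h|h
  · rw [min_eq_left h, max_eq_right h,
      abs_of_nonpos (by nlinarith [(div_le_div_iff₀ (by positivity) (by positivity)).mp h] :
        (i:ℝ) - j - n + 2*n*x ≤ 0)]
    field_simp
    ring
  · rw [min_eq_right h, max_eq_left h,
      abs_of_nonneg (by nlinarith [(div_le_div_iff₀ (by positivity) (by positivity)).mp h] :
        0 ≤ (i:ℝ) - j - n + 2*n*x)]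
    field_simp
    ring

set_option maxHeartbeats 1000000 in
theorem stmt7 (n : ℕ) (hn3 : 3 ≤ n) (hodd : Odd n) (x₀ : ℝ) (hx₀ : x₀ ∈ Icc (0 : ℝ) 1) :
    x₀ / 4 * (1 - 3 / n + 2 / n ^ 2) - 1 / (4 * n) ≤
      (∑ i ∈ Sn n, ∑ j ∈ Sn n,
        (volume (Q n i ∩ R n j ∩ Icc (0 : ℝ) x₀ ×ˢ Icc (0 : ℝ) 1)).toReal) ∧
    (∑ i ∈ Sn n, ∑ j ∈ Sn n,
        (volume (Q n i ∩ R n j ∩ Icc (0 : ℝ) x₀ ×ˢ Icc (0 : ℝ) 1)).toReal) ≤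
      x₀ / 4 * (1 - 3 / (2 * n) + 3 / (4 * n ^ 2)) + 3 / n := by
  classical
  obtain ⟨hx0, hx1⟩ := hx₀
  obtain ⟨p, hp⟩ := hodd
  have hp1 : 1 ≤ p := by omega
  obtain ⟨P, hP⟩ : ∃ P, p^2 = P := ⟨p^2, rfl⟩
  have hPp : p ≤ P := by rw [← hP]; exact Nat.le_self_pow (by norm_num) p
  have hsq : n^2 = 4*P + 4*p + 1 := by subst hp; rw [← hP]; ring
  have hν3 : (3:ℝ) ≤ (n:ℝ) := by exact_mod_cast hn3
  have hν : (0:ℝ) < n := by linarith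
  have hνp : (n:ℝ) = 2*(p:ℝ) + 1 := by rw [hp]; push_cast; ring
  -- the index set as an image
  set nn : ℕ := 2*P + p with hnn
  have hSn : Sn n = (Finset.range nn).image (fun b => 2*b) := by
    ext k
    simp only [Sn, Finset.mem_filter, Finset.mem_range, Finset.mem_image, Nat.even_iff]
    constructor
    · rintro ⟨hk1, hk2⟩
      exact ⟨k/2, by omega, by omega⟩
    · rintro ⟨a, ha, rfl⟩
      omega
  have hnncast : (nn:ℝ) = ((n:ℝ)^2 - n)/2 := by
    rw [hnn, hνp]; push_cast; rw [← hP]; push_cast; ring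
  -- per-term formula
  have hib : ∀ i : ℕ, i ≤ n^2 - n - 2 → (i:ℝ) ≤ (n:ℝ)^2 - n - 2 := by
    intro i hi
    have h1 : i + n + 2 ≤ n^2 := by omega
    have : (i:ℝ) + n + 2 ≤ (n:ℝ)^2 := by exact_mod_cast h1
    linarith
  have hterm : ∀ i j : ℕ, i ≤ n^2 - n - 2 →
      (volume (Q n i ∩ R n j ∩ Icc (0:ℝ) x₀ ×ˢ Icc (0:ℝ) 1)).toReal
        = ∫ x in Icc (0:ℝ) x₀, tent (n:ℝ) ((i:ℝ) - j - n) x := by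
    intro i j hi
    exact term_eq n hn3 i j (hib i hi) x₀ hx0 hx1
  
  set u : ℝ := (n:ℝ) * x₀ with hu
  have hu0 : 0 ≤ u := mul_nonneg hν.le hx0
  have huν : u ≤ (n:ℝ) := by nlinarith
  set q : ℕ := ⌊u⌋₊ with hq
  have hqu : (q:ℝ) ≤ u := Nat.floor_le hu0
  have huq : u < (q:ℝ) + 1 := Nat.lt_floor_add_one u
  have hqn : q ≤ n := by
    have h1 : (⌊u⌋₊ : ℕ) ≤ ⌊(n:ℝ)⌋₊ := Nat.floor_le_floor huν
    simpa [Nat.floor_natCast] using h1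
  have hqnn : q ≤ nn := by omega
  set M : ℕ := max p (q - 1) with hM
  have hM1 : p ≤ M := le_max_left _ _
  have hM2 : q - 1 ≤ M := le_max_right _ _
  have hMc : M = p ∨ M = q - 1 := max_choice p (q-1)
  have hMnn : M ≤ nn := by omega
  set A : ℕ := nn - M with hA
  -- terms are nonneg
  have hTnn : ∀ i j : ℕ, 0 ≤ (volume (Q n i ∩ R n j ∩ Icc (0:ℝ) x₀ ×ˢ Icc (0:ℝ) 1)).toReal :=
    fun i j => ENNReal.toReal_nonneg
  have hinj : ∀ x ∈ Finset.range nn, ∀ y ∈ Finset.range nn, 2*x = 2*y → x = y := by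
    intro x _ y _ h; omega
  -- full-measure terms
  have hfull : ∀ a b : ℕ, p ≤ a → a - p ≤ b → b + 1 ≤ a - p + q → a < nn →
      (volume (Q n (2*a) ∩ R n (2*b) ∩ Icc (0:ℝ) x₀ ×ˢ Icc (0:ℝ) 1)).toReal
        = 1/(2*(n:ℝ)^3) := by
    intro a b hpa hab hbf ha
    have h2a : 2*a ≤ n^2 - n - 2 := by omega
    rw [hterm (2*a) (2*b) h2a]
    rw [show ((2*a:ℕ):ℝ) - ((2*b:ℕ):ℝ) - (n:ℝ) = 2*(a:ℝ) - 2*(b:ℝ) - n from by push_cast; ring]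
    apply tentI_full x₀ hν
    · have hb : (a:ℝ) - p ≤ b := by
        have h1 : ((a - p : ℕ):ℝ) ≤ b := Nat.cast_le.mpr hab
        rwa [Nat.cast_sub hpa] at h1
      rw [hνp]; linarith
    · have hb2 : (b:ℝ) + 1 ≤ (a:ℝ) - p + q := by
        have h1 : ((b + 1 : ℕ):ℝ) ≤ ((a - p + q : ℕ):ℝ) := Nat.cast_le.mpr hbf
        push_cast [Nat.cast_sub hpa] at h1
        linarith
      have hfu' : (q:ℝ) ≤ (n:ℝ)*x₀ := hqu
      rw [hνp]
      nlinarith [hfu', hb2]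
  -- rewrite double sum through the image
  have hrw : (∑ i ∈ Sn n, ∑ j ∈ Sn n,
        (volume (Q n i ∩ R n j ∩ Icc (0:ℝ) x₀ ×ˢ Icc (0:ℝ) 1)).toReal)
      = ∑ a ∈ Finset.range nn, ∑ b ∈ Finset.range nn,
        (volume (Q n (2*a) ∩ R n (2*b) ∩ Icc (0:ℝ) x₀ ×ˢ Icc (0:ℝ) 1)).toReal := by
    rw [hSn, Finset.sum_image hinj]
    exact Finset.sum_congr rfl fun a _ => Finset.sum_image hinj
  -- lower bound chain
  have low2 : ∑ a ∈ Finset.Ico p (p+A), ∑ b ∈ Finset.Ico (a-p) (a-p+q),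
      (volume (Q n (2*a) ∩ R n (2*b) ∩ Icc (0:ℝ) x₀ ×ˢ Icc (0:ℝ) 1)).toReal
      = (A:ℝ) * ((q:ℝ) * (1/(2*(n:ℝ)^3))) := by
    have hinner : ∀ a ∈ Finset.Ico p (p+A), ∑ b ∈ Finset.Ico (a-p) (a-p+q),
        (volume (Q n (2*a) ∩ R n (2*b) ∩ Icc (0:ℝ) x₀ ×ˢ Icc (0:ℝ) 1)).toReal
        = (q:ℝ) * (1/(2*(n:ℝ)^3)) := by
      intro a ha
      rw [Finset.mem_Ico] at ha
      rw [Finset.sum_congr rfl (fun b hb => ?_), Finset.sum_const, Nat.card_Ico,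
        Nat.add_sub_cancel_left, nsmul_eq_mul]
      rw [Finset.mem_Ico] at hb
      exact hfull a b ha.1 hb.1 hb.2 (by omega)
    rw [Finset.sum_congr rfl hinner, Finset.sum_const, Nat.card_Ico,
      Nat.add_sub_cancel_left, nsmul_eq_mul]
  have low1 : ∑ a ∈ Finset.Ico p (p+A), ∑ b ∈ Finset.Ico (a-p) (a-p+q),
      (volume (Q n (2*a) ∩ R n (2*b) ∩ Icc (0:ℝ) x₀ ×ˢ Icc (0:ℝ) 1)).toReal
      ≤ ∑ a ∈ Finset.range nn, ∑ b ∈ Finset.range nn,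
        (volume (Q n (2*a) ∩ R n (2*b) ∩ Icc (0:ℝ) x₀ ×ˢ Icc (0:ℝ) 1)).toReal := by
    have step1 : ∑ a ∈ Finset.Ico p (p+A), ∑ b ∈ Finset.Ico (a-p) (a-p+q),
        (volume (Q n (2*a) ∩ R n (2*b) ∩ Icc (0:ℝ) x₀ ×ˢ Icc (0:ℝ) 1)).toReal
        ≤ ∑ a ∈ Finset.Ico p (p+A), ∑ b ∈ Finset.range nn,
          (volume (Q n (2*a) ∩ R n (2*b) ∩ Icc (0:ℝ) x₀ ×ˢ Icc (0:ℝ) 1)).toReal := by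
      apply Finset.sum_le_sum
      intro a ha
      rw [Finset.mem_Ico] at ha
      apply Finset.sum_le_sum_of_subset_of_nonneg
      · intro b hb
        rw [Finset.mem_Ico] at hb
        rw [Finset.mem_range]
        omega
      · intro b _ _; exact hTnn _ _
    refine le_trans step1 ?_
    apply Finset.sum_le_sum_of_subset_of_nonneg
    · intro a ha
      rw [Finset.mem_Ico] at ha
      rw [Finset.mem_range]
      omega
    · intro a _ _
      exact Finset.sum_nonneg fun b _ => hTnn _ _
  
  -- upper bound: inner sums
  have hcardSn : (Sn n).card = nn := by
    rw [hSn, Finset.card_image_of_injOn (fun x _ y _ h => by omega), Finset.card_range]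
  have hminner : ∀ i ∈ Sn n, ∑ j ∈ Sn n,
      (volume (Q n i ∩ R n j ∩ Icc (0:ℝ) x₀ ×ˢ Icc (0:ℝ) 1)).toReal
      ≤ ((q:ℝ)+1) * (1/(2*(n:ℝ)^3)) := by
    intro i hi
    have hi' : i ≤ n^2 - n - 2 ∧ i % 2 = 0 := by
      have := hi
      simp only [Sn, Finset.mem_filter, Finset.mem_range, Nat.even_iff] at this
      omega
    set cond : ℕ → Prop :=
      fun j => ((i:ℝ) - j - n < 1 ∧ -1 < (i:ℝ) - j - n + 2*(n:ℝ)*x₀) with hcond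
    have hstep : ∀ j ∈ Sn n, (volume (Q n i ∩ R n j ∩ Icc (0:ℝ) x₀ ×ˢ Icc (0:ℝ) 1)).toReal
        ≤ if cond j then 1/(2*(n:ℝ)^3) else 0 := by
      intro j hj
      rw [hterm i j hi'.1]
      by_cases hc : cond j
      · rw [if_pos hc]
        exact tentI_le x₀ hν hx0
      · rw [if_neg hc]
        refine le_of_eq (tentI_zero x₀ hν hx0 ?_)
        have hc' : ¬(((i:ℝ) - j - n < 1) ∧ (-1 < (i:ℝ) - j - n + 2*(n:ℝ)*x₀)) := hc
        push_neg at hc'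
        rcases le_or_gt 1 ((i:ℝ) - j - n) with h|h
        · exact Or.inl h
        · exact Or.inr (by linarith [hc' h])
    have hfact : ∀ j ∈ (Sn n).filter cond, i + 1 ≤ j + n ∧ j % 2 = 0 ∧
        2*((j + n - (i+1))/2) = j + n - (i+1) ∧ (j:ℝ) + n - (i+1) < 2*(n:ℝ)*x₀ := by
      intro j hj
      rw [Finset.mem_filter] at hj
      obtain ⟨hjS, hc1, hc2⟩ := hj
      have hjev : j % 2 = 0 := by
        simp only [Sn, Finset.mem_filter, Finset.mem_range, Nat.even_iff] at hjS
        exact hjS.2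
      have hin : i < j + n + 1 := by
        have h1 : (i:ℝ) < (j:ℝ) + n + 1 := by linarith
        exact_mod_cast h1
      have hjn : i + 1 ≤ j + n := by omega
      refine ⟨hjn, hjev, by omega, by linarith⟩
    have hcard : ((Sn n).filter cond).card ≤ q + 1 := by
      have hinjcard : ((Sn n).filter cond).card ≤ (Finset.range (q+1)).card := by
        apply Finset.card_le_card_of_injOn (fun j => (j + n - (i+1))/2)
        · intro j hj
          obtain ⟨hjn, hjev, h2k, hlt⟩ := hfact j hj
          simp only [Finset.coe_range, Set.mem_Iio]
          have hkr : 2*(((j + n - (i+1))/2 : ℕ):ℝ) = (j:ℝ) + n - (i+1) := by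
            have e1 : ((2*((j + n - (i+1))/2) : ℕ):ℝ) = ((j + n - (i+1) : ℕ):ℝ) := by
              exact_mod_cast congrArg (Nat.cast : ℕ → ℝ) h2k
            push_cast [Nat.cast_sub hjn] at e1
            push_cast
            linarith
          have hku : (((j + n - (i+1))/2 : ℕ):ℝ) ≤ u := by
            rw [hu]; linarith
          have := Nat.le_floor hku
          omega
        · intro j1 h1 j2 h2 he
          obtain ⟨hjn1, hjev1, h2k1, -⟩ := hfact j1 h1
          obtain ⟨hjn2, hjev2, h2k2, -⟩ := hfact j2 h2
          simp only at he
          omega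
      simpa using hinjcard
    calc ∑ j ∈ Sn n, (volume (Q n i ∩ R n j ∩ Icc (0:ℝ) x₀ ×ˢ Icc (0:ℝ) 1)).toReal
        ≤ ∑ j ∈ Sn n, (if cond j then 1/(2*(n:ℝ)^3) else 0) := Finset.sum_le_sum hstep
      _ = ∑ j ∈ (Sn n).filter cond, 1/(2*(n:ℝ)^3) := (Finset.sum_filter _ _).symm
      _ = (((Sn n).filter cond).card : ℝ) * (1/(2*(n:ℝ)^3)) := by
          rw [Finset.sum_const, nsmul_eq_mul]
      _ ≤ ((q:ℝ)+1) * (1/(2*(n:ℝ)^3)) := by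
          apply mul_le_mul_of_nonneg_right _ (by positivity)
          have : (((Sn n).filter cond).card : ℝ) ≤ ((q+1 : ℕ):ℝ) := Nat.cast_le.mpr hcard
          push_cast at this
          linarith
  have hupper : (∑ i ∈ Sn n, ∑ j ∈ Sn n,
        (volume (Q n i ∩ R n j ∩ Icc (0:ℝ) x₀ ×ˢ Icc (0:ℝ) 1)).toReal)
      ≤ (nn:ℝ) * (((q:ℝ)+1) * (1/(2*(n:ℝ)^3))) := by
    calc (∑ i ∈ Sn n, ∑ j ∈ Sn n,
          (volume (Q n i ∩ R n j ∩ Icc (0:ℝ) x₀ ×ˢ Icc (0:ℝ) 1)).toReal)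
        ≤ ∑ _i ∈ Sn n, ((q:ℝ)+1) * (1/(2*(n:ℝ)^3)) := Finset.sum_le_sum hminner
      _ = ((Sn n).card : ℝ) * (((q:ℝ)+1) * (1/(2*(n:ℝ)^3))) := by
          rw [Finset.sum_const, nsmul_eq_mul]
      _ = (nn:ℝ) * (((q:ℝ)+1) * (1/(2*(n:ℝ)^3))) := by rw [hcardSn]
  constructor
  · -- lower bound
    have hAq : (A:ℝ) * ((q:ℝ) * (1/(2*(n:ℝ)^3)))
        ≤ (∑ i ∈ Sn n, ∑ j ∈ Sn n,
          (volume (Q n i ∩ R n j ∩ Icc (0:ℝ) x₀ ×ˢ Icc (0:ℝ) 1)).toReal) := by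
      rw [hrw]
      exact le_trans (le_of_eq low2.symm) low1
    refine le_trans ?_ hAq
    have hpcast : (p:ℝ) = ((n:ℝ) - 1)/2 := by rw [hνp]; ring
    rcases hMc with hMp | hMq
    · -- A = nn - p
      have hAc : (A:ℝ) = ((n:ℝ)^2 - n)/2 - ((n:ℝ)-1)/2 := by
        rw [hA, hMp, Nat.cast_sub (by omega), hnncast, hpcast]
      rw [← sub_nonneg]
      have key : (A:ℝ) * ((q:ℝ) * (1/(2*(n:ℝ)^3)))
          - (x₀/4*(1 - 3/(n:ℝ) + 2/(n:ℝ)^2) - 1/(4*(n:ℝ)))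
          = ((q:ℝ)*((n:ℝ)-1)^2 + (n:ℝ)^2 - ((n:ℝ)*x₀)*((n:ℝ)-1)*((n:ℝ)-2))/(4*(n:ℝ)^3) := by
        rw [hAc]
        field_simp
        ring
      rw [key]
      apply div_nonneg _ (by positivity)
      nlinarith [mul_nonneg (by linarith : (0:ℝ) ≤ (q:ℝ) + 1 - u)
          (mul_nonneg (by linarith : (0:ℝ) ≤ (n:ℝ) - 1) (by linarith : (0:ℝ) ≤ (n:ℝ) - 2)),
        mul_nonneg (Nat.cast_nonneg q) (by linarith : (0:ℝ) ≤ (n:ℝ) - 1)]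
    · -- A = nn - (q-1)
      have hq2 : 2 ≤ q := by omega
      have hAc : (A:ℝ) = ((n:ℝ)^2 - n)/2 - (q:ℝ) + 1 := by
        rw [hA, hMq, Nat.cast_sub (by omega), hnncast, Nat.cast_sub (by omega)]
        push_cast
        ring
      rw [← sub_nonneg]
      have key : (A:ℝ) * ((q:ℝ) * (1/(2*(n:ℝ)^3)))
          - (x₀/4*(1 - 3/(n:ℝ) + 2/(n:ℝ)^2) - 1/(4*(n:ℝ)))
          = ((q:ℝ)*((n:ℝ)^2 - (n:ℝ) + 2 - 2*(q:ℝ)) + (n:ℝ)^2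
            - ((n:ℝ)*x₀)*((n:ℝ)-1)*((n:ℝ)-2))/(4*(n:ℝ)^3) := by
        rw [hAc]
        field_simp
        ring
      rw [key]
      apply div_nonneg _ (by positivity)
      have hqν : (q:ℝ) ≤ (n:ℝ) := by exact_mod_cast hqn
      nlinarith [mul_nonneg (by linarith : (0:ℝ) ≤ (q:ℝ) + 1 - u)
          (mul_nonneg (by linarith : (0:ℝ) ≤ (n:ℝ) - 1) (by linarith : (0:ℝ) ≤ (n:ℝ) - 2)),
        mul_nonneg (Nat.cast_nonneg q) (by linarith : (0:ℝ) ≤ (n:ℝ) - (q:ℝ))]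
  · -- upper bound
    refine le_trans hupper ?_
    rw [← sub_nonneg]
    have key : (x₀/4*(1 - 3/(2*(n:ℝ)) + 3/(4*(n:ℝ)^2)) + 3/(n:ℝ))
        - (nn:ℝ) * (((q:ℝ)+1) * (1/(2*(n:ℝ)^3)))
        = (((n:ℝ)*x₀)*((n:ℝ)^2 - (3/2)*(n:ℝ) + 3/4) + 12*(n:ℝ)^2
          - ((n:ℝ)^2 - (n:ℝ))*((q:ℝ)+1))/(4*(n:ℝ)^3) := by
      rw [hnncast]
      field_simp
      ring
    rw [key]
    apply div_nonneg _ (by positivity)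
    nlinarith [mul_nonneg (by linarith : (0:ℝ) ≤ u - (q:ℝ))
        (by nlinarith : (0:ℝ) ≤ (n:ℝ)^2 - (n:ℝ))]
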